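/- Let Q be a medial quandle, let d ∈ Dis(Q), and let q*, q** ∈ Q be arbitrary. Then β_{q*} d β_{q*}⁻¹ = β_{q**} d β_{q**}⁻¹; that is, conjugation of a displacement by a translation does not depend on the choice of translation. -/

import Mathlib

open LaurentPolynomial

set_option synthInstance.maxHeartbeats 1000000
set_option maxHeartbeats 1000000

noncomputable section

/-- The ring `Λ = ℤ[t,t⁻¹]` of Laurent polynomials with integer coefficients. -/
abbrev Λ : Type := LaurentPolynomial ℤ

/-- The variable `t ∈ Λ`. -/
abbrev tL : Λ := T 1

/-- A medial quandle structure on a type `Q`: an idempotent binary operation whose right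
translations are bijections, satisfying the medial law. -/
structure MedialQuandleStr (Q : Type*) where
  op : Q → Q → Q
  idem : ∀ x, op x x = x
  bij : ∀ y, Function.Bijective fun x => op x y
  medial : ∀ w x y z, op (op w x) (op y z) = op (op w y) (op x z)

/-- A quandle structure on a type `T`. -/
structure QuandleStr (T : Type*) where
  op : T → T → T
  idem : ∀ x, op x x = x
  bij : ∀ y, Function.Bijective fun x => op x y
  distrib : ∀ x y z, op (op x y) z = op (op x z) (op y z)

namespace MedialQuandleStr

variable {Q : Type*} (s : MedialQuandleStr Q)

/-- The translation `β_y : x ↦ x ▷ y`, as a permutation of `Q`. -/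
def β (y : Q) : Equiv.Perm Q := Equiv.ofBijective _ (s.bij y)

/-- `β(Q)`: the subgroup of permutations generated by the translations. -/
def transGroup : Subgroup (Equiv.Perm Q) := Subgroup.closure (Set.range s.β)

/-- The displacement group `Dis(Q)`, generated by the elementary displacements
`β_y β_z⁻¹`. -/
def Dis : Subgroup (Equiv.Perm Q) :=
  Subgroup.closure {d : Equiv.Perm Q | ∃ y z, d = s.β y * (s.β z)⁻¹}

/-- The orbit of `q`: the smallest subset of `Q` containing `q` and closed under the
action of `β(Q)`. -/
def orbit (q : Q) : Set Q := {x | ∃ g ∈ s.transGroup, g q = x}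

end MedialQuandleStr

section Construction

variable {M : Type*} [AddCommGroup M] [Module Λ M] {I : Type*}

/-- The carrier of the quandle `Q(N,(m_i),(X_i))`: the disjoint union of the quotients
`Q_i = N/X_i`. -/
def QCar (N : Submodule Λ M) (X : I → Submodule Λ ↥N) : Type _ :=
  Σ i : I, ↥N ⧸ X i

/-- The condition `(1-t)·X_i = 0` for all `i`. -/
def annCond (N : Submodule Λ M) (X : I → Submodule Λ ↥N) : Prop :=
  ∀ i, ∀ x ∈ X i, (1 - tL) • (x : ↥N) = 0

/-- Multiplication by `1-t`, descended from `N/X_j` to `N` (well defined since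
`(1-t)·X_j = 0`). -/
def oneSubT (N : Submodule Λ M) {X : I → Submodule Λ ↥N} (h : annCond N X) (j : I) :
    (↥N ⧸ X j) →ₗ[Λ] ↥N :=
  Submodule.liftQ (X j) ((1 - tL) • (LinearMap.id : ↥N →ₗ[Λ] ↥N))
    (fun x hx => by simpa using h j x hx)

/-- The operation of `Q(N,(m_i),(X_i))`: for `x ∈ Q_i` and `y ∈ Q_j`,
`x ▷ y = m_j - m_i + t·x + (1-t)·y + X_i ∈ Q_i`. -/
def qop (N : Submodule Λ M) (m : I → M) {X : I → Submodule Λ ↥N}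
    (hm : ∀ i j, m i - m j ∈ N) (h : annCond N X) :
    QCar N X → QCar N X → QCar N X :=
  fun x y =>
    ⟨x.1, Submodule.Quotient.mk (⟨m y.1 - m x.1, hm y.1 x.1⟩ : ↥N)
        + tL • x.2 + Submodule.Quotient.mk (oneSubT N h y.1 y.2)⟩

end Construction


namespace MedialQuandleStr

variable {Q : Type*} (s : MedialQuandleStr Q)

lemma β_apply (y x : Q) : s.β y x = s.op x y := rfl

/-- The operator form of the medial law: `β_{y▷z} β_x = β_{x▷z} β_y`. -/
lemma star (x y z : Q) : s.β (s.op y z) * s.β x = s.β (s.op x z) * s.β y := by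
  ext w
  simpa [β_apply, Equiv.Perm.mul_apply] using s.medial w x y z

/-- Conjugation of a translation by a translation: `β_q β_y β_q⁻¹ = β_{y▷q}`. -/
lemma conj_β (y q : Q) : s.β q * s.β y * (s.β q)⁻¹ = s.β (s.op y q) := by
  have h := s.star q y q
  rw [s.idem q] at h
  rw [← h]
  group

/-- Conjugation of an elementary displacement by a translation does not depend on the
translation. -/
lemma conj_gen (y z q c : Q) :
    s.β q * (s.β y * (s.β z)⁻¹) * (s.β q)⁻¹
      = s.β c * (s.β y * (s.β z)⁻¹) * (s.β c)⁻¹ := by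
  set x : Q := (s.β q)⁻¹ c with hx
  have hxq : s.op x q = c := Equiv.apply_symm_apply (s.β q) c
  have hy : s.β (s.op y q) = s.β c * s.β y * (s.β x)⁻¹ := by
    have h := s.star x y q
    rw [hxq] at h
    rw [← h]; group
  have hz : s.β (s.op z q) = s.β c * s.β z * (s.β x)⁻¹ := by
    have h := s.star x z q
    rw [hxq] at h
    rw [← h]; group
  have key : s.β q * (s.β y * (s.β z)⁻¹) * (s.β q)⁻¹
      = s.β (s.op y q) * (s.β (s.op z q))⁻¹ := by
    rw [← s.conj_β y q, ← s.conj_β z q]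
    group
  rw [key, hy, hz]
  group

end MedialQuandleStr

/-- In a medial quandle, conjugation of a displacement by a translation
does not depend on the choice of the translation:
`β_{q₁} d β_{q₁}⁻¹ = β_{q₂} d β_{q₂}⁻¹` for every `d ∈ Dis(Q)`. -/
theorem stmt2 {Q : Type*} (s : MedialQuandleStr Q) (d : Equiv.Perm Q)
    (hd : d ∈ s.Dis) (q₁ q₂ : Q) :
    s.β q₁ * d * (s.β q₁)⁻¹ = s.β q₂ * d * (s.β q₂)⁻¹ := by
  revert hd
  refine fun hd => Subgroup.closure_induction
    (p := fun g _ => s.β q₁ * g * (s.β q₁)⁻¹ = s.β q₂ * g * (s.β q₂)⁻¹)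
    ?_ ?_ ?_ ?_ hd
  · rintro g ⟨y, z, rfl⟩
    rw [s.conj_gen y z q₁ q₂]
  · group
  · intro a b _ _ ha hb
    have : s.β q₁ * (a * b) * (s.β q₁)⁻¹
        = (s.β q₁ * a * (s.β q₁)⁻¹) * (s.β q₁ * b * (s.β q₁)⁻¹) := by group
    rw [this, ha, hb]; group
  · intro a _ ha
    have h1 : s.β q₁ * a⁻¹ * (s.β q₁)⁻¹ = (s.β q₁ * a * (s.β q₁)⁻¹)⁻¹ := by group
    have h2 : s.β q₂ * a⁻¹ * (s.β q₂)⁻¹ = (s.β q₂ * a * (s.β q₂)⁻¹)⁻¹ := by group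
    rw [h1, h2, ha]
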